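/- If a matroid M is the direct sum of two matroids M_1 and M_2, then P_M(t) = P_{M_1}(t) · P_{M_2}(t). -/

import Mathlib

open Polynomial Finset

/-- A "pre-matroid": a finite ground set together with a rank function.
It is a matroid when `IsMatroid` holds. -/
structure PreMatroid (α : Type*) where
  E : Finset α
  r : Finset α → ℕ

namespace PreMatroid

variable {α : Type*} [DecidableEq α]

/-- The rank axioms for a rank function on the ground set `E`, extended to all finite
sets by `r A = r (A ∩ E)`. -/
def IsMatroid (M : PreMatroid α) : Prop :=
  M.r ∅ = 0 ∧ (∀ A, M.r A ≤ A.card) ∧ (∀ A B, A ⊆ B → M.r A ≤ M.r B) ∧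
    (∀ A B, M.r (A ∪ B) + M.r (A ∩ B) ≤ M.r A + M.r B) ∧ (∀ A, M.r (A ∩ M.E) = M.r A)

/-- The rank of a matroid. -/
def rk (M : PreMatroid α) : ℕ := M.r M.E

/-- The flats of a matroid: subsets of the ground set such that adding any new element of the
ground set increases the rank. -/
def flats (M : PreMatroid α) : Finset (Finset α) :=
  M.E.powerset.filter fun F => ∀ e ∈ M.E, e ∉ F → M.r F < M.r (insert e F)

theorem subset_of_mem_flats {M : PreMatroid α} {F : Finset α} (hF : F ∈ M.flats) : F ⊆ M.E :=
  mem_powerset.mp (mem_filter.mp hF).1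

/-- The Möbius function `μ(∅̂, F)` of the lattice of flats, where `∅̂` is the minimal flat:
`μ = 1` on the minimal flat, and on any other flat `F` it is minus the sum of the values of `μ`
on all flats strictly contained in `F`. -/
def mu (M : PreMatroid α) (F : Finset α) : ℤ :=
  if (M.flats.filter fun G => G ⊂ F).Nonempty then
    -∑ G ∈ (M.flats.filter fun G => G ⊂ F).attach, M.mu G.1
  else 1
termination_by F.card
decreasing_by exact Finset.card_lt_card (Finset.mem_filter.mp G.2).2

/-- The characteristic polynomial `χ_M(t) = ∑_{F ∈ L(M)} μ(∅̂,F) t^{rk M - rk F}`. -/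
noncomputable def charPoly (M : PreMatroid α) : Polynomial ℤ :=
  ∑ F ∈ M.flats, Polynomial.C (M.mu F) * Polynomial.X ^ (M.rk - M.r F)

/-- The localization `M_F`: the restriction of `M` to the flat `F`. -/
def loc (M : PreMatroid α) (F : Finset α) : PreMatroid α :=
  ⟨F, fun A => M.r (A ∩ F)⟩

/-- The contraction (restriction) `M^F` of `M` at the flat `F`, with ground set `E ∖ F` and
rank function `A ↦ r (A ∪ F) - r F`. -/
def con (M : PreMatroid α) (F : Finset α) : PreMatroid α :=
  ⟨M.E \ F, fun A => M.r ((A ∩ (M.E \ F)) ∪ F) - M.r F⟩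

theorem IsMatroid.con {M : PreMatroid α} (h : M.IsMatroid) {F : Finset α} (hF : F ⊆ M.E) :
    (M.con F).IsMatroid := by
  obtain ⟨h0, hle, hmono, hsub, hcomp⟩ := h
  refine ⟨?_, ?_, ?_, ?_, ?_⟩
  · show M.r ((∅ ∩ (M.E \ F)) ∪ F) - M.r F = 0
    simp
  · intro A
    show M.r ((A ∩ (M.E \ F)) ∪ F) - M.r F ≤ A.card
    have h1 := hsub (A ∩ (M.E \ F)) F
    have h2 := hle (A ∩ (M.E \ F))
    have h3 : (A ∩ (M.E \ F)).card ≤ A.card := card_le_card inter_subset_left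
    omega
  · intro A B hAB
    show M.r ((A ∩ (M.E \ F)) ∪ F) - M.r F ≤ M.r ((B ∩ (M.E \ F)) ∪ F) - M.r F
    have : (A ∩ (M.E \ F)) ∪ F ⊆ (B ∩ (M.E \ F)) ∪ F :=
      union_subset_union (inter_subset_inter hAB (Finset.Subset.refl _)) (Finset.Subset.refl _)
    exact Nat.sub_le_sub_right (hmono _ _ this) _
  · intro A B
    set D := M.E \ F with hD
    show M.r (((A ∪ B) ∩ D) ∪ F) - M.r F + (M.r (((A ∩ B) ∩ D) ∪ F) - M.r F) ≤
      M.r ((A ∩ D) ∪ F) - M.r F + (M.r ((B ∩ D) ∪ F) - M.r F)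
    have e1 : (A ∪ B) ∩ D ∪ F = ((A ∩ D) ∪ F) ∪ ((B ∩ D) ∪ F) := by
      ext x; simp; tauto
    have e2 : (A ∩ B) ∩ D ∪ F = ((A ∩ D) ∪ F) ∩ ((B ∩ D) ∪ F) := by
      ext x; simp; tauto
    have key := hsub ((A ∩ D) ∪ F) ((B ∩ D) ∪ F)
    have m1 := hmono F ((A ∩ D) ∪ F) subset_union_right
    have m2 := hmono F ((B ∩ D) ∪ F) subset_union_right
    have m3 := hmono F ((A ∪ B) ∩ D ∪ F) subset_union_right
    have m4 := hmono F ((A ∩ B) ∩ D ∪ F) subset_union_right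
    rw [← e1, ← e2] at key
    omega
  · intro A
    show M.r ((A ∩ (M.E \ F) ∩ (M.E \ F)) ∪ F) - M.r F = M.r ((A ∩ (M.E \ F)) ∪ F) - M.r F
    rw [inter_assoc, inter_self]

end PreMatroid

/-- The type of assignments, to each matroid (on any ground type), of a polynomial. -/
def KLfun : Type 1 := ∀ (α : Type) [DecidableEq α] (M : PreMatroid α), M.IsMatroid → Polynomial ℤ

/-- The defining conditions of the Kazhdan-Lusztig polynomial of a matroid:
`P_M = 1` in rank zero, `deg P_M < (rk M)/2` in positive rank, and the defining recursion
`t^{rk M} P_M(1/t) = ∑_{F ∈ L(M)} χ_{M_F}(t) P_{M^F}(t)`. -/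
def KLconds (P : KLfun) : Prop :=
  ∀ (α : Type) [DecidableEq α] (M : PreMatroid α) (h : M.IsMatroid),
    (M.rk = 0 → P α M h = 1) ∧
    (0 < M.rk → 2 * (P α M h).natDegree < M.rk) ∧
    ((P α M h).reflect M.rk =
      ∑ F ∈ M.flats.attach, (M.loc F.1).charPoly *
        P α (M.con F.1) (h.con (PreMatroid.subset_of_mem_flats F.2)))

/-- The direct sum of two pre-matroids on disjoint ground sets. -/
def PreMatroid.dsum {α : Type*} [DecidableEq α] (M₁ M₂ : PreMatroid α) : PreMatroid α :=
  ⟨M₁.E ∪ M₂.E, fun A => M₁.r (A ∩ M₁.E) + M₂.r (A ∩ M₂.E)⟩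

namespace KLaux
open PreMatroid
variable {α : Type*} [DecidableEq α]

lemma mem_flats_iff {M : PreMatroid α} {F : Finset α} :
    F ∈ M.flats ↔ F ⊆ M.E ∧ ∀ e ∈ M.E, e ∉ F → M.r F < M.r (insert e F) := by
  simp [PreMatroid.flats, Finset.mem_filter, Finset.mem_powerset]

section Dsum
variable {M₁ M₂ : PreMatroid α} (hd : Disjoint M₁.E M₂.E)
include hd

lemma union_inter_left {F₁ F₂ : Finset α} (h₁ : F₁ ⊆ M₁.E) (h₂ : F₂ ⊆ M₂.E) :
    (F₁ ∪ F₂) ∩ M₁.E = F₁ := by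
  ext x
  simp only [mem_inter, mem_union]
  constructor
  · rintro ⟨h1 | h2, he⟩
    · exact h1
    · exact absurd (h₂ h2) (Finset.disjoint_left.mp hd he)
  · intro hx; exact ⟨Or.inl hx, h₁ hx⟩

lemma union_inter_right {F₁ F₂ : Finset α} (h₁ : F₁ ⊆ M₁.E) (h₂ : F₂ ⊆ M₂.E) :
    (F₁ ∪ F₂) ∩ M₂.E = F₂ := by
  ext x
  simp only [mem_inter, mem_union]
  constructor
  · rintro ⟨h1 | h2, he⟩
    · exact absurd (h₁ h1) (Finset.disjoint_right.mp hd he)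
    · exact h2
  · intro hx; exact ⟨Or.inr hx, h₂ hx⟩

lemma union_eq_union_iff {F₁ F₂ G₁ G₂ : Finset α} (hF₁ : F₁ ⊆ M₁.E) (hF₂ : F₂ ⊆ M₂.E)
    (hG₁ : G₁ ⊆ M₁.E) (hG₂ : G₂ ⊆ M₂.E) : F₁ ∪ F₂ = G₁ ∪ G₂ ↔ F₁ = G₁ ∧ F₂ = G₂ := by
  constructor
  · intro hu
    constructor
    · rw [← union_inter_left hd hF₁ hF₂, hu, union_inter_left hd hG₁ hG₂]
    · rw [← union_inter_right hd hF₁ hF₂, hu, union_inter_right hd hG₁ hG₂]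
  · rintro ⟨rfl, rfl⟩; rfl

omit hd in
lemma E_dsum : (M₁.dsum M₂).E = M₁.E ∪ M₂.E := rfl

omit hd in
lemma r_dsum (A : Finset α) :
    (M₁.dsum M₂).r A = M₁.r (A ∩ M₁.E) + M₂.r (A ∩ M₂.E) := rfl

lemma r_dsum_union {F₁ F₂ : Finset α} (h₁ : F₁ ⊆ M₁.E) (h₂ : F₂ ⊆ M₂.E) :
    (M₁.dsum M₂).r (F₁ ∪ F₂) = M₁.r F₁ + M₂.r F₂ := by
  rw [r_dsum, union_inter_left hd h₁ h₂, union_inter_right hd h₁ h₂]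

omit hd in
lemma rk_dsum : (M₁.dsum M₂).rk = M₁.rk + M₂.rk := by
  show (M₁.dsum M₂).r ((M₁.dsum M₂).E) = _
  show M₁.r ((M₁.E ∪ M₂.E) ∩ M₁.E) + M₂.r ((M₁.E ∪ M₂.E) ∩ M₂.E) = _
  rw [Finset.union_inter_cancel_left, Finset.union_inter_cancel_right]; rfl

lemma union_mem_flats_dsum {F₁ F₂ : Finset α} (h₁ : F₁ ∈ M₁.flats) (h₂ : F₂ ∈ M₂.flats) :
    F₁ ∪ F₂ ∈ (M₁.dsum M₂).flats := by
  obtain ⟨hs₁, hc₁⟩ := mem_flats_iff.mp h₁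
  obtain ⟨hs₂, hc₂⟩ := mem_flats_iff.mp h₂
  refine mem_flats_iff.mpr ⟨union_subset_union hs₁ hs₂, ?_⟩
  intro e he hef
  rw [E_dsum, Finset.mem_union] at he
  rw [r_dsum_union hd hs₁ hs₂]
  rcases he with he | he
  · have hne : e ∉ M₂.E := Finset.disjoint_left.mp hd he
    rw [r_dsum, Finset.insert_inter_of_mem he, Finset.insert_inter_of_notMem hne,
      union_inter_left hd hs₁ hs₂, union_inter_right hd hs₁ hs₂]
    have := hc₁ e he (fun hx => hef (Finset.mem_union_left _ hx))
    omega
  · have hne : e ∉ M₁.E := Finset.disjoint_right.mp hd he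
    rw [r_dsum, Finset.insert_inter_of_mem he, Finset.insert_inter_of_notMem hne,
      union_inter_left hd hs₁ hs₂, union_inter_right hd hs₁ hs₂]
    have := hc₂ e he (fun hx => hef (Finset.mem_union_right _ hx))
    omega

lemma flats_dsum_decomp {F : Finset α} (hF : F ∈ (M₁.dsum M₂).flats) :
    F ∩ M₁.E ∈ M₁.flats ∧ F ∩ M₂.E ∈ M₂.flats ∧ F = (F ∩ M₁.E) ∪ (F ∩ M₂.E) := by
  obtain ⟨hs, hc⟩ := mem_flats_iff.mp hF
  have hdec : F = (F ∩ M₁.E) ∪ (F ∩ M₂.E) := by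
    rw [← Finset.inter_union_distrib_left]
    exact (Finset.inter_eq_left.mpr (by rw [← E_dsum (M₁:=M₁) (M₂:=M₂)]; exact hs)).symm
  refine ⟨mem_flats_iff.mpr ⟨Finset.inter_subset_right, ?_⟩,
    mem_flats_iff.mpr ⟨Finset.inter_subset_right, ?_⟩, hdec⟩
  · intro e he hef
    have heF : e ∉ F := fun hx => hef (Finset.mem_inter.mpr ⟨hx, he⟩)
    have hne : e ∉ M₂.E := Finset.disjoint_left.mp hd he
    have := hc e (by rw [E_dsum]; exact Finset.mem_union_left _ he) heF
    rw [r_dsum, r_dsum, Finset.insert_inter_of_mem he, Finset.insert_inter_of_notMem hne] at this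
    omega
  · intro e he hef
    have heF : e ∉ F := fun hx => hef (Finset.mem_inter.mpr ⟨hx, he⟩)
    have hne : e ∉ M₁.E := Finset.disjoint_right.mp hd he
    have := hc e (by rw [E_dsum]; exact Finset.mem_union_right _ he) heF
    rw [r_dsum, r_dsum, Finset.insert_inter_of_mem he, Finset.insert_inter_of_notMem hne] at this
    omega

lemma sum_flats_dsum {β : Type*} [AddCommMonoid β] (f : Finset α → β) :
    ∑ F ∈ (M₁.dsum M₂).flats, f F = ∑ p ∈ M₁.flats ×ˢ M₂.flats, f (p.1 ∪ p.2) := by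
  refine Finset.sum_nbij' (fun F => (F ∩ M₁.E, F ∩ M₂.E)) (fun p => p.1 ∪ p.2) ?_ ?_ ?_ ?_ ?_
  · intro F hF
    obtain ⟨hf₁, hf₂, _⟩ := flats_dsum_decomp hd hF
    exact Finset.mem_product.mpr ⟨hf₁, hf₂⟩
  · intro p hp
    obtain ⟨hp₁, hp₂⟩ := Finset.mem_product.mp hp
    exact union_mem_flats_dsum hd hp₁ hp₂
  · intro F hF
    exact (flats_dsum_decomp hd hF).2.2.symm
  · intro p hp
    obtain ⟨hp₁, hp₂⟩ := Finset.mem_product.mp hp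
    exact Prod.ext (union_inter_left hd (subset_of_mem_flats hp₁) (subset_of_mem_flats hp₂))
      (union_inter_right hd (subset_of_mem_flats hp₁) (subset_of_mem_flats hp₂))
  · intro F hF
    rw [← (flats_dsum_decomp hd hF).2.2]

omit hd in
lemma sum_mu_subsets {M : PreMatroid α} {F : Finset α} (hF : F ∈ M.flats) :
    ∑ G ∈ M.flats.filter (· ⊆ F), M.mu G =
      if (M.flats.filter fun G => G ⊂ F).Nonempty then 0 else 1 := by
  have hsplit : M.flats.filter (· ⊆ F) = insert F (M.flats.filter fun G => G ⊂ F) := by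
    ext G
    simp only [Finset.mem_filter, Finset.mem_insert]
    constructor
    · rintro ⟨hG, hGF⟩
      rcases eq_or_ne G F with h | h
      · exact Or.inl h
      · exact Or.inr ⟨hG, Finset.ssubset_iff_subset_ne.mpr ⟨hGF, h⟩⟩
    · rintro (rfl | ⟨hG, hGF⟩)
      · exact ⟨hF, Finset.Subset.refl _⟩
      · exact ⟨hG, hGF.subset⟩
  rw [hsplit, Finset.sum_insert (by intro hmem; exact (Finset.mem_filter.mp hmem).2.ne rfl)]
  rw [PreMatroid.mu]
  by_cases hne : (M.flats.filter fun G => G ⊂ F).Nonempty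
  · rw [if_pos hne, if_pos hne, Finset.sum_attach]
    ring
  · rw [if_neg hne, if_neg hne,
      Finset.not_nonempty_iff_eq_empty.mp hne, Finset.sum_empty]
    norm_num

lemma filter_ssubset_nonempty_dsum {F₁ F₂ : Finset α} (h₁ : F₁ ∈ M₁.flats)
    (h₂ : F₂ ∈ M₂.flats) :
    ((M₁.dsum M₂).flats.filter fun G => G ⊂ F₁ ∪ F₂).Nonempty ↔
      ((M₁.flats.filter fun G => G ⊂ F₁).Nonempty ∨
        (M₂.flats.filter fun G => G ⊂ F₂).Nonempty) := by
  have hs₁ := subset_of_mem_flats h₁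
  have hs₂ := subset_of_mem_flats h₂
  constructor
  · rintro ⟨G, hG⟩
    obtain ⟨hGf, hGss⟩ := Finset.mem_filter.mp hG
    obtain ⟨hg₁, hg₂, hdec⟩ := flats_dsum_decomp hd hGf
    have hsub₁ : G ∩ M₁.E ⊆ F₁ := by
      intro x hx
      have := hGss.subset (Finset.mem_inter.mp hx).1
      rw [Finset.mem_union] at this
      rcases this with h | h
      · exact h
      · exact absurd (hs₂ h) (Finset.disjoint_left.mp hd ((Finset.mem_inter.mp hx).2))
    have hsub₂ : G ∩ M₂.E ⊆ F₂ := by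
      intro x hx
      have := hGss.subset (Finset.mem_inter.mp hx).1
      rw [Finset.mem_union] at this
      rcases this with h | h
      · exact absurd (hs₁ h) (Finset.disjoint_right.mp hd ((Finset.mem_inter.mp hx).2))
      · exact h
    by_contra hcon
    push_neg at hcon
    obtain ⟨hc₁, hc₂⟩ := hcon
    rw [Finset.filter_eq_empty_iff] at hc₁ hc₂
    have e₁ : G ∩ M₁.E = F₁ := by
      by_contra hne
      exact hc₁ hg₁ (Finset.ssubset_iff_subset_ne.mpr ⟨hsub₁, hne⟩)
    have e₂ : G ∩ M₂.E = F₂ := by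
      by_contra hne
      exact hc₂ hg₂ (Finset.ssubset_iff_subset_ne.mpr ⟨hsub₂, hne⟩)
    exact hGss.ne (by rw [hdec, e₁, e₂])
  · rintro (⟨G₁, hG₁⟩ | ⟨G₂, hG₂⟩)
    · obtain ⟨hg, hss⟩ := Finset.mem_filter.mp hG₁
      refine ⟨G₁ ∪ F₂, Finset.mem_filter.mpr ⟨union_mem_flats_dsum hd hg h₂, ?_⟩⟩
      refine Finset.ssubset_iff_subset_ne.mpr
        ⟨Finset.union_subset_union hss.subset (Finset.Subset.refl _), ?_⟩
      intro hEq
      exact hss.ne ((union_eq_union_iff hd (subset_of_mem_flats hg) hs₂ hs₁ hs₂).mp hEq).1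
    · obtain ⟨hg, hss⟩ := Finset.mem_filter.mp hG₂
      refine ⟨F₁ ∪ G₂, Finset.mem_filter.mpr ⟨union_mem_flats_dsum hd h₁ hg, ?_⟩⟩
      refine Finset.ssubset_iff_subset_ne.mpr
        ⟨Finset.union_subset_union (Finset.Subset.refl _) hss.subset, ?_⟩
      intro hEq
      exact hss.ne ((union_eq_union_iff hd hs₁ (subset_of_mem_flats hg) hs₁ hs₂).mp hEq).2

lemma mu_dsum_aux : ∀ n, ∀ F₁ F₂ : Finset α, F₁ ∈ M₁.flats → F₂ ∈ M₂.flats →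
    (F₁ ∪ F₂).card < n → (M₁.dsum M₂).mu (F₁ ∪ F₂) = M₁.mu F₁ * M₂.mu F₂ := by
  intro n
  induction n with
  | zero => intro F₁ F₂ _ _ hc; omega
  | succ n ih =>
    intro F₁ F₂ h₁ h₂ hc
    have hs₁ := subset_of_mem_flats h₁
    have hs₂ := subset_of_mem_flats h₂
    -- reindex the sum over proper subflats
    have hsum : ∑ G ∈ (M₁.dsum M₂).flats.filter (fun G => G ⊂ F₁ ∪ F₂), (M₁.dsum M₂).mu G =
        ∑ p ∈ ((M₁.flats.filter (· ⊆ F₁)) ×ˢ (M₂.flats.filter (· ⊆ F₂))) \ {(F₁, F₂)},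
          M₁.mu p.1 * M₂.mu p.2 := by
      refine Finset.sum_nbij' (fun G => (G ∩ M₁.E, G ∩ M₂.E)) (fun p => p.1 ∪ p.2)
        ?_ ?_ ?_ ?_ ?_
      · intro G hG
        obtain ⟨hGf, hGss⟩ := Finset.mem_filter.mp hG
        obtain ⟨hg₁, hg₂, hdec⟩ := flats_dsum_decomp hd hGf
        rw [Finset.mem_sdiff, Finset.mem_product]
        have hsub₁ : G ∩ M₁.E ⊆ F₁ := by
          rw [show F₁ = (F₁ ∪ F₂) ∩ M₁.E from (union_inter_left hd hs₁ hs₂).symm]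
          exact Finset.inter_subset_inter hGss.subset (Finset.Subset.refl _)
        have hsub₂ : G ∩ M₂.E ⊆ F₂ := by
          rw [show F₂ = (F₁ ∪ F₂) ∩ M₂.E from (union_inter_right hd hs₁ hs₂).symm]
          exact Finset.inter_subset_inter hGss.subset (Finset.Subset.refl _)
        refine ⟨⟨Finset.mem_filter.mpr ⟨hg₁, hsub₁⟩, Finset.mem_filter.mpr ⟨hg₂, hsub₂⟩⟩, ?_⟩
        rw [Finset.mem_singleton]
        intro hEq
        apply hGss.ne
        rw [hdec, show G ∩ M₁.E = F₁ from congrArg Prod.fst hEq,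
          show G ∩ M₂.E = F₂ from congrArg Prod.snd hEq]
      · intro p hp
        rw [Finset.mem_sdiff, Finset.mem_product] at hp
        obtain ⟨⟨hp₁, hp₂⟩, hpne⟩ := hp
        obtain ⟨hpf₁, hpF₁⟩ := Finset.mem_filter.mp hp₁
        obtain ⟨hpf₂, hpF₂⟩ := Finset.mem_filter.mp hp₂
        refine Finset.mem_filter.mpr ⟨union_mem_flats_dsum hd hpf₁ hpf₂, ?_⟩
        refine Finset.ssubset_iff_subset_ne.mpr ⟨Finset.union_subset_union hpF₁ hpF₂, ?_⟩
        intro hEq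
        obtain ⟨e₁, e₂⟩ := (union_eq_union_iff hd (subset_of_mem_flats hpf₁)
          (subset_of_mem_flats hpf₂) hs₁ hs₂).mp hEq
        exact (Finset.mem_singleton.not.mp hpne) (Prod.ext e₁ e₂)
      · intro G hG
        obtain ⟨hGf, _⟩ := Finset.mem_filter.mp hG
        exact (flats_dsum_decomp hd hGf).2.2.symm
      · intro p hp
        rw [Finset.mem_sdiff, Finset.mem_product] at hp
        obtain ⟨⟨hp₁, hp₂⟩, _⟩ := hp
        exact Prod.ext
          (union_inter_left hd (subset_of_mem_flats (Finset.mem_filter.mp hp₁).1)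
            (subset_of_mem_flats (Finset.mem_filter.mp hp₂).1))
          (union_inter_right hd (subset_of_mem_flats (Finset.mem_filter.mp hp₁).1)
            (subset_of_mem_flats (Finset.mem_filter.mp hp₂).1))
      · intro G hG
        obtain ⟨hGf, hGss⟩ := Finset.mem_filter.mp hG
        obtain ⟨hg₁, hg₂, hdec⟩ := flats_dsum_decomp hd hGf
        have hcard : (G ∩ M₁.E ∪ G ∩ M₂.E).card < n := by
          rw [← hdec]
          have := Finset.card_lt_card hGss
          omega
        rw [show (M₁.dsum M₂).mu G =
          (M₁.dsum M₂).mu ((G ∩ M₁.E) ∪ (G ∩ M₂.E)) from by rw [← hdec]]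
        exact ih (G ∩ M₁.E) (G ∩ M₂.E) hg₁ hg₂ hcard
    have htop : {(F₁, F₂)} ⊆ (M₁.flats.filter (· ⊆ F₁)) ×ˢ (M₂.flats.filter (· ⊆ F₂)) := by
      rw [Finset.singleton_subset_iff, Finset.mem_product]
      exact ⟨Finset.mem_filter.mpr ⟨h₁, Finset.Subset.refl _⟩,
        Finset.mem_filter.mpr ⟨h₂, Finset.Subset.refl _⟩⟩
    rw [PreMatroid.mu]
    by_cases hne : ((M₁.dsum M₂).flats.filter fun G => G ⊂ F₁ ∪ F₂).Nonempty
    · rw [if_pos hne, Finset.sum_attach _ (fun G => (M₁.dsum M₂).mu G), hsum,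
        Finset.sum_sdiff_eq_sub htop, Finset.sum_singleton]
      have hprod : ∑ p ∈ (M₁.flats.filter (· ⊆ F₁)) ×ˢ (M₂.flats.filter (· ⊆ F₂)),
          M₁.mu p.1 * M₂.mu p.2 =
          (∑ G ∈ M₁.flats.filter (· ⊆ F₁), M₁.mu G) *
            (∑ G ∈ M₂.flats.filter (· ⊆ F₂), M₂.mu G) := by
        rw [Finset.sum_mul_sum, Finset.sum_product]
      rw [hprod, sum_mu_subsets h₁, sum_mu_subsets h₂]
      rcases (filter_ssubset_nonempty_dsum hd h₁ h₂).mp hne with hc | hc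
      · rw [if_pos hc]; ring
      · rw [if_pos hc]; ring
    · rw [if_neg hne]
      rw [filter_ssubset_nonempty_dsum hd h₁ h₂] at hne
      push_neg at hne
      rw [PreMatroid.mu, if_neg (Finset.not_nonempty_iff_eq_empty.mpr hne.1), PreMatroid.mu,
        if_neg (Finset.not_nonempty_iff_eq_empty.mpr hne.2)]
      ring

lemma mu_dsum {F₁ F₂ : Finset α} (h₁ : F₁ ∈ M₁.flats) (h₂ : F₂ ∈ M₂.flats) :
    (M₁.dsum M₂).mu (F₁ ∪ F₂) = M₁.mu F₁ * M₂.mu F₂ :=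
  mu_dsum_aux hd ((F₁ ∪ F₂).card + 1) F₁ F₂ h₁ h₂ (Nat.lt_succ_self _)

lemma loc_dsum {F₁ F₂ : Finset α} (h₁ : F₁ ⊆ M₁.E) (h₂ : F₂ ⊆ M₂.E) :
    (M₁.dsum M₂).loc (F₁ ∪ F₂) = (M₁.loc F₁).dsum (M₂.loc F₂) := by
  show (⟨F₁ ∪ F₂, fun A => (M₁.dsum M₂).r (A ∩ (F₁ ∪ F₂))⟩ : PreMatroid α) =
    ⟨F₁ ∪ F₂, fun A => M₁.r (A ∩ F₁ ∩ F₁) + M₂.r (A ∩ F₂ ∩ F₂)⟩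
  rw [PreMatroid.mk.injEq]
  refine ⟨rfl, funext fun A => ?_⟩
  rw [r_dsum, Finset.inter_assoc A, union_inter_left hd h₁ h₂,
    Finset.inter_assoc A, union_inter_right hd h₁ h₂,
    Finset.inter_assoc A F₁, Finset.inter_self, Finset.inter_assoc A F₂, Finset.inter_self]

lemma con_dsum {F₁ F₂ : Finset α}
    (hm₁ : ∀ A B, A ⊆ B → M₁.r A ≤ M₁.r B) (hm₂ : ∀ A B, A ⊆ B → M₂.r A ≤ M₂.r B)
    (h₁ : F₁ ⊆ M₁.E) (h₂ : F₂ ⊆ M₂.E) :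
    (M₁.dsum M₂).con (F₁ ∪ F₂) = (M₁.con F₁).dsum (M₂.con F₂) := by
  have hdE : (M₁.dsum M₂).E \ (F₁ ∪ F₂) = (M₁.E \ F₁) ∪ (M₂.E \ F₂) := by
    rw [E_dsum]
    ext x
    simp only [Finset.mem_sdiff, Finset.mem_union]
    have d1 : x ∈ M₁.E → x ∉ M₂.E := fun hx => Finset.disjoint_left.mp hd hx
    have d2 : x ∈ M₂.E → x ∉ M₁.E := fun hx => Finset.disjoint_right.mp hd hx
    have f1 : x ∈ F₁ → x ∈ M₁.E := fun hx => h₁ hx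
    have f2 : x ∈ F₂ → x ∈ M₂.E := fun hx => h₂ hx
    constructor
    · rintro ⟨hE | hE, hnF⟩
      · exact Or.inl ⟨hE, fun hx => hnF (Or.inl hx)⟩
      · exact Or.inr ⟨hE, fun hx => hnF (Or.inr hx)⟩
    · rintro (⟨hE, hnF⟩ | ⟨hE, hnF⟩)
      · refine ⟨Or.inl hE, ?_⟩
        rintro (hx | hx)
        · exact hnF hx
        · exact d1 hE (f2 hx)
      · refine ⟨Or.inr hE, ?_⟩
        rintro (hx | hx)
        · exact d2 hE (f1 hx)
        · exact hnF hx
  show (⟨(M₁.dsum M₂).E \ (F₁ ∪ F₂), _⟩ : PreMatroid α) = ⟨(M₁.E \ F₁) ∪ (M₂.E \ F₂), _⟩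
  rw [PreMatroid.mk.injEq]
  refine ⟨hdE, funext fun A => ?_⟩
  show (M₁.dsum M₂).r ((A ∩ ((M₁.dsum M₂).E \ (F₁ ∪ F₂))) ∪ (F₁ ∪ F₂)) -
      (M₁.dsum M₂).r (F₁ ∪ F₂) =
    (M₁.r ((A ∩ (M₁.E \ F₁)) ∩ (M₁.E \ F₁) ∪ F₁) - M₁.r F₁) +
      (M₂.r ((A ∩ (M₂.E \ F₂)) ∩ (M₂.E \ F₂) ∪ F₂) - M₂.r F₂)
  rw [Finset.inter_assoc, Finset.inter_self, Finset.inter_assoc, Finset.inter_self]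
  have hXa : (A ∩ (M₁.E \ F₁) ∪ F₁) ⊆ M₁.E :=
    Finset.union_subset ((Finset.inter_subset_right).trans (Finset.sdiff_subset)) h₁
  have hXb : (A ∩ (M₂.E \ F₂) ∪ F₂) ⊆ M₂.E :=
    Finset.union_subset ((Finset.inter_subset_right).trans (Finset.sdiff_subset)) h₂
  have hU : A ∩ ((M₁.dsum M₂).E \ (F₁ ∪ F₂)) ∪ (F₁ ∪ F₂) =
      ((A ∩ (M₁.E \ F₁)) ∪ F₁) ∪ ((A ∩ (M₂.E \ F₂)) ∪ F₂) := by
    rw [hdE, Finset.inter_union_distrib_left]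
    ext x; simp only [Finset.mem_union]; tauto
  rw [hU, r_dsum_union hd hXa hXb, r_dsum_union hd h₁ h₂]
  have m1 : M₁.r F₁ ≤ M₁.r (A ∩ (M₁.E \ F₁) ∪ F₁) := hm₁ _ _ Finset.subset_union_right
  have m2 : M₂.r F₂ ≤ M₂.r (A ∩ (M₂.E \ F₂) ∪ F₂) := hm₂ _ _ Finset.subset_union_right
  omega

lemma charPoly_dsum (hm₁ : ∀ A B, A ⊆ B → M₁.r A ≤ M₁.r B)
    (hm₂ : ∀ A B, A ⊆ B → M₂.r A ≤ M₂.r B) :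
    (M₁.dsum M₂).charPoly = M₁.charPoly * M₂.charPoly := by
  unfold PreMatroid.charPoly
  rw [sum_flats_dsum hd, Finset.sum_mul_sum, Finset.sum_product]
  refine Finset.sum_congr rfl fun F₁ hF₁ => Finset.sum_congr rfl fun F₂ hF₂ => ?_
  have hs₁ := subset_of_mem_flats hF₁
  have hs₂ := subset_of_mem_flats hF₂
  rw [mu_dsum hd hF₁ hF₂, r_dsum_union hd hs₁ hs₂, rk_dsum]
  have b₁ : M₁.r F₁ ≤ M₁.rk := hm₁ _ _ hs₁
  have b₂ : M₂.r F₂ ≤ M₂.rk := hm₂ _ _ hs₂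
  have hexp : M₁.rk + M₂.rk - (M₁.r F₁ + M₂.r F₂) =
      (M₁.rk - M₁.r F₁) + (M₂.rk - M₂.r F₂) := by omega
  rw [hexp, map_mul, pow_add]
  ring

end Dsum

lemma con_empty {M : PreMatroid α} (h : M.IsMatroid) : M.con ∅ = M := by
  obtain ⟨h0, -, -, -, h5⟩ := h
  have : M = ⟨M.E, M.r⟩ := rfl
  rw [this]
  show (⟨M.E \ ∅, fun A => M.r ((A ∩ (M.E \ ∅)) ∪ ∅) - M.r ∅⟩ : PreMatroid α) = _
  rw [PreMatroid.mk.injEq]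
  refine ⟨Finset.sdiff_empty, funext fun A => ?_⟩
  rw [Finset.sdiff_empty, Finset.union_empty, h5, h0, Nat.sub_zero]

lemma rk_con {M : PreMatroid α} {F : Finset α} (hF : F ⊆ M.E) :
    (M.con F).rk = M.rk - M.r F := by
  show M.r (((M.E \ F) ∩ (M.E \ F)) ∪ F) - M.r F = _
  rw [Finset.inter_self, Finset.sdiff_union_of_subset hF]
  rfl

lemma card_con {M : PreMatroid α} {F : Finset α} (hF : F ⊆ M.E) :
    (M.con F).E.card = M.E.card - F.card := Finset.card_sdiff_of_subset hF

lemma loc_empty {M : PreMatroid α} (h : M.IsMatroid) :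
    M.loc ∅ = ⟨∅, fun _ => 0⟩ := by
  show (⟨∅, fun A => M.r (A ∩ ∅)⟩ : PreMatroid α) = _
  rw [PreMatroid.mk.injEq]
  refine ⟨rfl, funext fun A => ?_⟩
  rw [Finset.inter_empty, h.1]

lemma charPoly_trivial : (⟨∅, fun _ => 0⟩ : PreMatroid α).charPoly = 1 := by
  have hflats : (⟨∅, fun _ => 0⟩ : PreMatroid α).flats = {∅} := by
    unfold PreMatroid.flats
    rw [Finset.powerset_empty]
    ext G
    simp
  unfold PreMatroid.charPoly
  rw [hflats, Finset.sum_singleton]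
  have hmu : (⟨∅, fun _ => 0⟩ : PreMatroid α).mu ∅ = 1 := by
    rw [PreMatroid.mu, if_neg]
    rw [Finset.nonempty_iff_ne_empty]
    push_neg
    rw [Finset.filter_eq_empty_iff]
    intro G hG
    rw [hflats, Finset.mem_singleton] at hG
    subst hG
    exact fun hss => hss.ne rfl
  rw [hmu]
  show Polynomial.C 1 * Polynomial.X ^ (0 - 0) = 1
  simp

lemma reflect_sub (N : ℕ) (f g : Polynomial ℤ) :
    (f - g).reflect N = f.reflect N - g.reflect N := by
  ext i
  simp [Polynomial.coeff_reflect]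

lemma eq_zero_of_reflect_eq_zero {f : Polynomial ℤ} {N : ℕ} (h : f.reflect N = 0) :
    f = 0 := by
  ext n
  have := congrArg (fun p => Polynomial.coeff p (Polynomial.revAt N n)) h
  simpa [Polynomial.coeff_reflect, Polynomial.revAt_invol] using this

lemma eq_zero_of_reflect_self {f : Polynomial ℤ} {N : ℕ} (h : f.reflect N = f)
    (hdeg : 2 * f.natDegree < N) : f = 0 := by
  by_contra hf
  have hn : f.coeff f.natDegree ≠ 0 := by
    rw [← Polynomial.leadingCoeff]
    exact Polynomial.leadingCoeff_ne_zero.mpr hf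
  have h1 : f.coeff (N - f.natDegree) = f.coeff f.natDegree := by
    have := congrArg (fun p => Polynomial.coeff p (N - f.natDegree)) h
    simp only [Polynomial.coeff_reflect] at this
    rw [Polynomial.revAt_le (by omega), show N - (N - f.natDegree) = f.natDegree by omega]
      at this
    exact this.symm
  have h2 : f.coeff (N - f.natDegree) = 0 :=
    Polynomial.coeff_eq_zero_of_natDegree_lt (by omega)
  rw [h2] at h1
  exact hn h1.symm

end KLaux

section Main

open KLaux PreMatroid

/-- The summand of the KL recursion, as a total function of the flat. -/
noncomputable def KLterm (P : KLfun) {α : Type} [DecidableEq α] (M : PreMatroid α)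
    (h : M.IsMatroid) (F : Finset α) : Polynomial ℤ :=
  if hF : F ⊆ M.E then (M.loc F).charPoly * P α (M.con F) (h.con hF) else 0

lemma KLterm_of_subset (P : KLfun) {α : Type} [DecidableEq α] {M : PreMatroid α}
    {h : M.IsMatroid} {F : Finset α} (hF : F ⊆ M.E) :
    KLterm P M h F = (M.loc F).charPoly * P α (M.con F) (h.con hF) := dif_pos hF

lemma KLrecursion (P : KLfun) (hP : KLconds P) {α : Type} [DecidableEq α]
    (M : PreMatroid α) (h : M.IsMatroid) :
    (P α M h).reflect M.rk = ∑ F ∈ M.flats, KLterm P M h F := by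
  rw [(hP α M h).2.2, ← Finset.sum_attach M.flats (KLterm P M h)]
  refine Finset.sum_congr rfl fun F _ => ?_
  rw [KLterm_of_subset P (subset_of_mem_flats F.2)]

lemma P_congr (P : KLfun) {α : Type} [DecidableEq α] {M M' : PreMatroid α}
    (e : M = M') (hM : M.IsMatroid) (hM' : M'.IsMatroid) : P α M hM = P α M' hM' := by
  subst e; rfl

lemma KLdeg_le (P : KLfun) (hP : KLconds P) {α : Type} [DecidableEq α]
    (M : PreMatroid α) (h : M.IsMatroid) : 2 * (P α M h).natDegree ≤ M.rk := by
  rcases Nat.eq_zero_or_pos M.rk with h0 | hpos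
  · rw [(hP α M h).1 h0, h0]
    simp
  · exact le_of_lt ((hP α M h).2.1 hpos)

/-- If a matroid `M` is the direct sum of two matroids `M₁` and `M₂`
(on disjoint ground sets), then `P_M(t) = P_{M₁}(t) · P_{M₂}(t)`. -/
theorem kl_direct_sum (P : KLfun) (hP : KLconds P)
    (α : Type) [DecidableEq α] (M₁ M₂ : PreMatroid α) (h₁ : M₁.IsMatroid) (h₂ : M₂.IsMatroid)
    (hdisj : Disjoint M₁.E M₂.E) (h : (M₁.dsum M₂).IsMatroid) :
    P α (M₁.dsum M₂) h = P α M₁ h₁ * P α M₂ h₂ := by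
  suffices H : ∀ n (M₁ M₂ : PreMatroid α) (h₁ : M₁.IsMatroid) (h₂ : M₂.IsMatroid)
      (_ : Disjoint M₁.E M₂.E) (h : (M₁.dsum M₂).IsMatroid),
      (M₁.dsum M₂).rk + (M₁.dsum M₂).E.card ≤ n →
      P α (M₁.dsum M₂) h = P α M₁ h₁ * P α M₂ h₂ by
    exact H _ M₁ M₂ h₁ h₂ hdisj h le_rfl
  intro n
  induction n with
  | zero =>
    intro M₁ M₂ h₁ h₂ hd h hn
    have hrk : (M₁.dsum M₂).rk = 0 := by omega
    have hrk' : M₁.rk = 0 ∧ M₂.rk = 0 := by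
      have := rk_dsum (M₁ := M₁) (M₂ := M₂)
      omega
    rw [(hP α _ h).1 hrk, (hP α M₁ h₁).1 hrk'.1, (hP α M₂ h₂).1 hrk'.2]
    ring
  | succ n ih =>
    intro M₁ M₂ h₁ h₂ hd h hn
    by_cases hrk : (M₁.dsum M₂).rk = 0
    · have hrk' : M₁.rk = 0 ∧ M₂.rk = 0 := by
        have := rk_dsum (M₁ := M₁) (M₂ := M₂)
        omega
      rw [(hP α _ h).1 hrk, (hP α M₁ h₁).1 hrk'.1, (hP α M₂ h₂).1 hrk'.2]
      ring
    · set M := M₁.dsum M₂ with hM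
      -- the recursion for M, reindexed over pairs of flats
      have R : (P α M h).reflect M.rk =
          ∑ p ∈ M₁.flats ×ˢ M₂.flats, KLterm P M h (p.1 ∪ p.2) :=
        (KLrecursion P hP M h).trans (sum_flats_dsum hd _)
      -- the recursion for the product
      have Rprod : (P α M₁ h₁ * P α M₂ h₂).reflect M.rk =
          ∑ p ∈ M₁.flats ×ˢ M₂.flats, KLterm P M₁ h₁ p.1 * KLterm P M₂ h₂ p.2 := by
        rw [hM, rk_dsum,
          Polynomial.reflect_mul _ _ (by have := KLdeg_le P hP M₁ h₁; omega)
            (by have := KLdeg_le P hP M₂ h₂; omega),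
          KLrecursion P hP M₁ h₁, KLrecursion P hP M₂ h₂,
          Finset.sum_mul_sum, Finset.sum_product]
      -- termwise comparison
      have key : ∀ p ∈ M₁.flats ×ˢ M₂.flats,
          KLterm P M h (p.1 ∪ p.2) - KLterm P M₁ h₁ p.1 * KLterm P M₂ h₂ p.2 =
          if p = ((∅ : Finset α), (∅ : Finset α)) then
            P α M h - P α M₁ h₁ * P α M₂ h₂ else 0 := by
        rintro ⟨F₁, F₂⟩ hp
        obtain ⟨hF₁, hF₂⟩ := Finset.mem_product.mp hp
        have hs₁ := subset_of_mem_flats hF₁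
        have hs₂ := subset_of_mem_flats hF₂
        have hsub : F₁ ∪ F₂ ⊆ M.E := by
          rw [hM, E_dsum]
          exact Finset.union_subset_union hs₁ hs₂
        have hloc : (M.loc (F₁ ∪ F₂)).charPoly =
            (M₁.loc F₁).charPoly * (M₂.loc F₂).charPoly := by
          rw [hM, loc_dsum hd hs₁ hs₂]
          refine charPoly_dsum (Finset.disjoint_of_subset_left hs₁
            (Finset.disjoint_of_subset_right hs₂ hd)) ?_ ?_
          · intro A B hAB
            exact h₁.2.2.1 _ _ (Finset.inter_subset_inter hAB (Finset.Subset.refl _))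
          · intro A B hAB
            exact h₂.2.2.1 _ _ (Finset.inter_subset_inter hAB (Finset.Subset.refl _))
        have hcon : M.con (F₁ ∪ F₂) = (M₁.con F₁).dsum (M₂.con F₂) := by
          rw [hM]
          exact con_dsum hd h₁.2.2.1 h₂.2.2.1 hs₁ hs₂
        rw [KLterm_of_subset P hsub, KLterm_of_subset P hs₁, KLterm_of_subset P hs₂, hloc]
        by_cases hemp : (F₁, F₂) = ((∅ : Finset α), (∅ : Finset α))
        · injection hemp with e₁ e₂
          subst e₁; subst e₂
          rw [if_pos rfl]
          have l1 : (M₁.loc (∅ : Finset α)).charPoly = 1 := by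
            rw [loc_empty h₁, charPoly_trivial]
          have l2 : (M₂.loc (∅ : Finset α)).charPoly = 1 := by
            rw [loc_empty h₂, charPoly_trivial]
          rw [l1, l2]
          have c0 : (∅ : Finset α) ∪ ∅ = ∅ := Finset.union_empty _
          rw [P_congr P (by rw [c0]; exact con_empty h) (h.con hsub) h,
            P_congr P (con_empty h₁) (h₁.con hs₁) h₁,
            P_congr P (con_empty h₂) (h₂.con hs₂) h₂]
          ring
        · rw [if_neg hemp]
          -- use the induction hypothesis on the contraction
          have hFne : F₁ ∪ F₂ ≠ ∅ := by
            intro hE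
            rw [Finset.union_eq_empty] at hE
            exact hemp (by rw [hE.1, hE.2])
          have hcard : 0 < (F₁ ∪ F₂).card :=
            Finset.card_pos.mpr (Finset.nonempty_iff_ne_empty.mpr hFne)
          have hmeas : (M.con (F₁ ∪ F₂)).rk + (M.con (F₁ ∪ F₂)).E.card ≤ n := by
            rw [rk_con hsub, card_con hsub]
            have hb1 : M.r (F₁ ∪ F₂) ≤ M.rk := h.2.2.1 _ _ hsub
            have hb2 : (F₁ ∪ F₂).card ≤ M.E.card := Finset.card_le_card hsub
            omega
          have hmeas' : ((M₁.con F₁).dsum (M₂.con F₂)).rk +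
              ((M₁.con F₁).dsum (M₂.con F₂)).E.card ≤ n := by
            rw [← hcon]; exact hmeas
          have hd' : Disjoint (M₁.con F₁).E (M₂.con F₂).E :=
            Finset.disjoint_of_subset_left (Finset.sdiff_subset)
              (Finset.disjoint_of_subset_right (Finset.sdiff_subset) hd)
          have hcm : ((M₁.con F₁).dsum (M₂.con F₂)).IsMatroid := hcon ▸ h.con hsub
          have := ih (M₁.con F₁) (M₂.con F₂) (h₁.con hs₁) (h₂.con hs₂) hd' hcm hmeas'
          rw [P_congr P hcon (h.con hsub) hcm, this]
          ring
      -- sum up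
      have hdiff : (P α M h - P α M₁ h₁ * P α M₂ h₂).reflect M.rk =
          if ((∅ : Finset α), (∅ : Finset α)) ∈ M₁.flats ×ˢ M₂.flats then
            P α M h - P α M₁ h₁ * P α M₂ h₂ else 0 := by
        rw [KLaux.reflect_sub, R, Rprod, ← Finset.sum_sub_distrib, Finset.sum_congr rfl key,
          Finset.sum_ite_eq' (M₁.flats ×ˢ M₂.flats)]
      by_cases hmem : ((∅ : Finset α), (∅ : Finset α)) ∈ M₁.flats ×ˢ M₂.flats
      · rw [if_pos hmem] at hdiff
        have hz : P α M h - P α M₁ h₁ * P α M₂ h₂ = 0 := by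
          refine eq_zero_of_reflect_self hdiff ?_
          have d1 := KLdeg_le P hP M₁ h₁
          have d2 := KLdeg_le P hP M₂ h₂
          have dM := (hP α M h).2.1 (Nat.pos_of_ne_zero hrk)
          have t₁ : 2 * (P α M₁ h₁).natDegree < M₁.rk ∨ M₁.rk = 0 := by
            rcases Nat.eq_zero_or_pos M₁.rk with h0 | hpos
            · exact Or.inr h0
            · exact Or.inl ((hP α M₁ h₁).2.1 hpos)
          have t₂ : 2 * (P α M₂ h₂).natDegree < M₂.rk ∨ M₂.rk = 0 := by
            rcases Nat.eq_zero_or_pos M₂.rk with h0 | hpos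
            · exact Or.inr h0
            · exact Or.inl ((hP α M₂ h₂).2.1 hpos)
          have hmul : (P α M₁ h₁ * P α M₂ h₂).natDegree ≤
              (P α M₁ h₁).natDegree + (P α M₂ h₂).natDegree := Polynomial.natDegree_mul_le
          have hsub : (P α M h - P α M₁ h₁ * P α M₂ h₂).natDegree ≤
              max (P α M h).natDegree (P α M₁ h₁ * P α M₂ h₂).natDegree :=
            Polynomial.natDegree_sub_le _ _
          have hMrk : M.rk = M₁.rk + M₂.rk := rk_dsum (M₁ := M₁) (M₂ := M₂)
          have hmax1 : max (P α M h).natDegree (P α M₁ h₁ * P α M₂ h₂).natDegree =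
              (P α M h).natDegree ∨
              max (P α M h).natDegree (P α M₁ h₁ * P α M₂ h₂).natDegree =
              (P α M₁ h₁ * P α M₂ h₂).natDegree := max_choice _ _
          omega
        rw [← sub_eq_zero]
        exact hz
      · rw [if_neg hmem] at hdiff
        have hz : P α M h - P α M₁ h₁ * P α M₂ h₂ = 0 := eq_zero_of_reflect_eq_zero hdiff
        rw [← sub_eq_zero]
        exact hz

end Main
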